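/- The solitary wave satisfies the Serre (Green–Naghdi, flat-bottom) momentum equation: for all x, t ∈ ℝ, ∂_t u + u·∂_x u + g·∂_x h = (1/(3h))·∂_x[ h³·( ∂_x∂_t u + u·∂_x² u − (∂_x u)² ) ], where h = h(x,t) and u = u(x,t) are the solitary wave fields. -/

import Mathlib

noncomputable def solF (a ξ : ℝ) : ℝ := a / Real.cosh ξ ^ 2
noncomputable def solP (a ξ : ℝ) : ℝ := -(2*a*Real.sinh ξ) / Real.cosh ξ ^ 3
noncomputable def solU (a c d ξ : ℝ) : ℝ := c * solF a ξ / (d + solF a ξ)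
noncomputable def solU1 (a c d ξ : ℝ) : ℝ := c*d*solP a ξ/(d + solF a ξ)^2
noncomputable def solU2 (a c d ξ : ℝ) : ℝ :=
  c*d*((4*solF a ξ - 6*(solF a ξ)^2/a)*(d + solF a ξ) - 2*(solP a ξ)^2)/(d + solF a ξ)^3
noncomputable def solG (a c d ξ : ℝ) : ℝ :=
  -(2*c^2*d^2*solF a ξ*(2*a*d - 3*d*solF a ξ - (solF a ξ)^2))/(a*(d + solF a ξ))
noncomputable def solG1 (a c d ξ : ℝ) : ℝ :=
  -(4*c^2*d^2*solP a ξ*(a*d^2 + d^3 - (d + solF a ξ)^3))/(a*(d + solF a ξ)^2)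

lemma solF_pos {a : ℝ} (ha : 0 < a) (ξ : ℝ) : 0 < solF a ξ :=
  div_pos ha (pow_pos (Real.cosh_pos ξ) 2)

lemma solH_pos {a d : ℝ} (ha : 0 < a) (hd : 0 < d) (ξ : ℝ) : 0 < d + solF a ξ :=
  add_pos hd (solF_pos ha ξ)

lemma hasDerivAt_solF (a ξ : ℝ) : HasDerivAt (fun s => solF a s) (solP a ξ) ξ := by
  have h1 : HasDerivAt (fun s : ℝ => Real.cosh s ^ 2)
      ((2:ℕ) * Real.cosh ξ ^ 1 * Real.sinh ξ) ξ := (Real.hasDerivAt_cosh ξ).pow 2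
  have h2 := (hasDerivAt_const ξ a).div h1 (ne_of_gt (pow_pos (Real.cosh_pos ξ) 2))
  refine h2.congr_deriv (Eq.symm ?_)
  have hC := Real.cosh_pos (x := ξ)
  unfold solP
  field_simp
  ring

lemma hasDerivAt_solP {a : ℝ} (ha : a ≠ 0) (ξ : ℝ) :
    HasDerivAt (fun s => solP a s) (4*solF a ξ - 6*(solF a ξ)^2/a) ξ := by
  have h1 : HasDerivAt (fun s : ℝ => Real.cosh s ^ 3)
      ((3:ℕ) * Real.cosh ξ ^ 2 * Real.sinh ξ) ξ := (Real.hasDerivAt_cosh ξ).pow 3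
  have h0 : HasDerivAt (fun s : ℝ => -(2*a*Real.sinh s)) (-(2*a*Real.cosh ξ)) ξ := by
    simpa using (((Real.hasDerivAt_sinh ξ).const_mul (2*a)).fun_neg)
  have h2 := h0.div h1 (ne_of_gt (pow_pos (Real.cosh_pos ξ) 3))
  refine h2.congr_deriv (Eq.symm ?_)
  have hC := (Real.cosh_pos (x := ξ)).ne'
  have hs := Real.sinh_sq ξ
  unfold solF
  field_simp
  linear_combination (-6) * hs

lemma solP_sq {a : ℝ} (ha : a ≠ 0) (ξ : ℝ) :
    a * (solP a ξ)^2 = 4*(solF a ξ)^2*(a - solF a ξ) := by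
  have hC := (Real.cosh_pos (x := ξ)).ne'
  have hs := Real.sinh_sq ξ
  unfold solP solF
  field_simp
  linear_combination 4 * hs

lemma hasDerivAt_solU {a d : ℝ} (c : ℝ) (ha : 0 < a) (hd : 0 < d) (ξ : ℝ) :
    HasDerivAt (fun s => solU a c d s) (solU1 a c d ξ) ξ := by
  have hH := (solH_pos ha hd ξ).ne'
  have h1 := ((hasDerivAt_solF a ξ).const_mul c).div
    ((hasDerivAt_const ξ d).fun_add (hasDerivAt_solF a ξ)) hH
  refine h1.congr_deriv (Eq.symm ?_)
  unfold solU1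
  field_simp
  ring

lemma hasDerivAt_solU1 {a d : ℝ} (c : ℝ) (ha : 0 < a) (hd : 0 < d) (ξ : ℝ) :
    HasDerivAt (fun s => solU1 a c d s) (solU2 a c d ξ) ξ := by
  have hH := (solH_pos ha hd ξ).ne'
  have hden : HasDerivAt (fun s : ℝ => (d + solF a s)^2)
      ((2:ℕ) * (d + solF a ξ)^1 * solP a ξ) ξ := by
    simpa using (((hasDerivAt_const ξ d).fun_add (hasDerivAt_solF a ξ)).fun_pow 2)
  have hnum : HasDerivAt (fun s : ℝ => c*d*solP a s) (c*d*(4*solF a ξ - 6*(solF a ξ)^2/a)) ξ :=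
    ((hasDerivAt_solP ha.ne' ξ).const_mul (c*d))
  have h1 := hnum.div hden (pow_ne_zero 2 hH)
  refine h1.congr_deriv (Eq.symm ?_)
  unfold solU2
  field_simp
  ring

lemma hasDerivAt_solG {a d : ℝ} (c : ℝ) (ha : 0 < a) (hd : 0 < d) (ξ : ℝ) :
    HasDerivAt (fun s => solG a c d s) (solG1 a c d ξ) ξ := by
  have hH := (solH_pos ha hd ξ).ne'
  have hq := hasDerivAt_solF a ξ
  have hnum : HasDerivAt
      (fun s : ℝ => -(2*c^2*d^2*solF a s*(2*a*d - 3*d*solF a s - (solF a s)^2)))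
      (-(2*c^2*d^2*solP a ξ*(2*a*d - 3*d*solF a ξ - (solF a ξ)^2)
        + 2*c^2*d^2*solF a ξ*(-(3*d*solP a ξ) - (2:ℕ)*(solF a ξ)^1*solP a ξ))) ξ := by
    simpa using (((hq.const_mul (2*c^2*d^2)).fun_mul
      (((hasDerivAt_const ξ (2*a*d)).fun_sub (hq.const_mul (3*d))).fun_sub (hq.fun_pow 2)))).fun_neg
  have hden : HasDerivAt (fun s : ℝ => a*(d + solF a s)) (a * solP a ξ) ξ := by
    simpa using (((hasDerivAt_const ξ d).add hq).const_mul a)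
  have h1 := hnum.div hden (by positivity)
  refine h1.congr_deriv (Eq.symm ?_)
  unfold solG1
  field_simp
  ring


/-- The solitary wave satisfies the Serre (Green–Naghdi, flat-bottom) momentum
equation:
`∂_t u + u ∂_x u + g ∂_x h = (1/(3h)) ∂_x [ h³ (∂_x∂_t u + u ∂_x² u − (∂_x u)²) ]`. -/
theorem solitary_wave_serre_momentum
    (g d a x₀ : ℝ) (hg : 0 < g) (hd : 0 < d) (ha : 0 < a)
    (c K : ℝ)
    (hc : c = Real.sqrt (g * (d + a)))
    (hK : K = Real.sqrt (3 * a / (4 * d ^ 2 * (d + a))))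
    (η h u : ℝ → ℝ → ℝ)
    (hη : ∀ x t, η x t = a / (Real.cosh (K * (x - c * t - x₀))) ^ 2)
    (hh : ∀ x t, h x t = d + η x t)
    (hu : ∀ x t, u x t = c * η x t / (d + η x t)) :
    ∀ x t : ℝ,
      deriv (fun s => u x s) t + u x t * deriv (fun y => u y t) x
          + g * deriv (fun y => h y t) x
        = (1 / (3 * h x t)) *
            deriv (fun y =>
              (h y t) ^ 3 *
                (deriv (fun z => deriv (fun s => u z s) t) y
                  + u y t * deriv (deriv (fun z => u z t)) y
                  - (deriv (fun z => u z t) y) ^ 2)) x := by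
  intro x t
  have hda : (0:ℝ) < d + a := by linarith
  have hc2 : c^2 = g*(d+a) := by
    rw [hc, sq]; exact Real.mul_self_sqrt (by positivity)
  have hK2 : K^2 = 3*a/(4*d^2*(d+a)) := by
    rw [hK, sq]; exact Real.mul_self_sqrt (by positivity)
  have hueq : ∀ y s : ℝ, u y s = solU a c d (K*(y - c*s - x₀)) := by
    intro y s; rw [hu, hη]; simp [solU, solF]
  have hheq : ∀ y s : ℝ, h y s = d + solF a (K*(y - c*s - x₀)) := by
    intro y s; rw [hh, hη]; simp [solF]
  -- chain rule helpers
  have hlinx : ∀ (s y : ℝ), HasDerivAt (fun z : ℝ => K*(z - c*s - x₀)) K y := by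
    intro s y
    simpa using ((((hasDerivAt_id y).sub_const (c*s)).sub_const x₀).const_mul K)
  have hlint : ∀ (z s : ℝ), HasDerivAt (fun r : ℝ => K*(z - c*r - x₀)) (-(K*c)) s := by
    intro z s
    have h1 : HasDerivAt (fun r : ℝ => z - c*r - x₀) (-c) s := by
      simpa using (((hasDerivAt_const s z).sub ((hasDerivAt_id s).const_mul c)).sub_const x₀)
    simpa using h1.const_mul K
  -- derivative computations
  have Dut : ∀ y s : ℝ, deriv (fun r => u y r) s = solU1 a c d (K*(y - c*s - x₀)) * (-(K*c)) := by
    intro y s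
    have e : (fun r => u y r) = fun r => solU a c d (K*(y - c*r - x₀)) :=
      funext fun r => hueq y r
    rw [e]
    exact ((hasDerivAt_solU c ha hd _).comp s (hlint y s)).deriv
  have Dux : ∀ y s : ℝ, deriv (fun z => u z s) y = solU1 a c d (K*(y - c*s - x₀)) * K := by
    intro y s
    have e : (fun z => u z s) = fun z => solU a c d (K*(z - c*s - x₀)) :=
      funext fun z => hueq z s
    rw [e]
    exact ((hasDerivAt_solU c ha hd _).comp y (hlinx s y)).deriv
  have Dhx : deriv (fun z => h z t) x = solP a (K*(x - c*t - x₀)) * K := by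
    have e : (fun z => h z t) = fun z => d + solF a (K*(z - c*t - x₀)) :=
      funext fun z => hheq z t
    rw [e]
    exact (((hasDerivAt_solF a _).comp x (hlinx t x)).const_add d).deriv
  -- rewrite the big bracket function
  have bigeq : (fun y =>
      (h y t) ^ 3 *
        (deriv (fun z => deriv (fun s => u z s) t) y
          + u y t * deriv (deriv (fun z => u z t)) y
          - (deriv (fun z => u z t) y) ^ 2))
      = fun y => K^2 * solG a c d (K*(y - c*t - x₀)) := by
    funext y
    have e1 : (fun z => deriv (fun s => u z s) t)
        = fun z => solU1 a c d (K*(z - c*t - x₀)) * (-(K*c)) :=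
      funext fun z => Dut z t
    have e2 : deriv (fun z => u z t)
        = fun z => solU1 a c d (K*(z - c*t - x₀)) * K :=
      funext fun z => Dux z t
    rw [e1, e2, hheq y t, hueq y t]
    have d1 : deriv (fun z => solU1 a c d (K*(z - c*t - x₀)) * (-(K*c))) y
        = (solU2 a c d (K*(y - c*t - x₀)) * K) * (-(K*c)) :=
      (((hasDerivAt_solU1 c ha hd _).comp y (hlinx t y)).mul_const _).deriv
    have d2 : deriv (fun z => solU1 a c d (K*(z - c*t - x₀)) * K) y
        = (solU2 a c d (K*(y - c*t - x₀)) * K) * K :=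
      (((hasDerivAt_solU1 c ha hd _).comp y (hlinx t y)).mul_const _).deriv
    rw [d1, d2]
    -- algebra with the ODE relation
    set ζ := K*(y - c*t - x₀)
    have hp2 := solP_sq ha.ne' ζ
    have hH := (solH_pos ha hd ζ).ne'
    have hH' : d + solF a (K * (y - c * t - x₀)) ≠ 0 := hH
    unfold solU solU1 solU2 solG
    field_simp
    linear_combination c^2*K^2*d*(d + solF a ζ)^4 * hp2
  rw [bigeq, Dut x t, Dux x t, Dhx, hueq x t, hheq x t]
  set ζ := K*(x - c*t - x₀) with hζ
  have dG : deriv (fun y => K^2 * solG a c d (K*(y - c*t - x₀))) x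
      = K^2 * (solG1 a c d ζ * K) :=
    (((hasDerivAt_solG c ha hd _).comp x (hlinx t x)).const_mul _).deriv
  rw [dG]
  have hH := (solH_pos ha hd ζ).ne'
  have lhs_eq : solU1 a c d ζ * (-(K*c)) + solU a c d ζ * (solU1 a c d ζ * K)
      + g * (solP a ζ * K)
      = K * solP a ζ * (g - c^2*d^2/(d + solF a ζ)^3) := by
    unfold solU solU1
    field_simp
    ring
  have rhs_eq : 1/(3*(d + solF a ζ)) * (K^2 * (solG1 a c d ζ * K))
      = K * solP a ζ * (g - c^2*d^2/(d + solF a ζ)^3) := by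
    unfold solG1
    rw [hK2, hc2]
    have : d + a ≠ 0 := hda.ne'
    field_simp
    ring
  rw [lhs_eq, rhs_eq]
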